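/- For every real m×n matrix A and vectors x ∈ ℝⁿ, y ∈ ℝᵐ, one has |⟨Ax, y⟩| ≤ 4·‖x‖_∞·‖y‖_∞·‖A‖_□·m·n. -/

import Mathlib

open Matrix Finset

/-- The cut-norm of a real `m × n` matrix:
`max_{X ⊆ [m], Y ⊆ [n]} |Σ(A[X,Y])| / (mn)`. -/
noncomputable def cutNorm {m n : ℕ} (A : Matrix (Fin m) (Fin n) ℝ) : ℝ :=
  Finset.univ.sup' Finset.univ_nonempty
    (fun p : Finset (Fin m) × Finset (Fin n) =>
      |∑ i ∈ p.1, ∑ j ∈ p.2, A i j| / (m * n))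

lemma cutNorm_nonneg' {m n : ℕ} (A : Matrix (Fin m) (Fin n) ℝ) : 0 ≤ cutNorm A := by
  have h := Finset.le_sup' (s := (Finset.univ : Finset (Finset (Fin m) × Finset (Fin n))))
    (fun p : Finset (Fin m) × Finset (Fin n) =>
      |∑ i ∈ p.1, ∑ j ∈ p.2, A i j| / (m * n)) (b := ((∅ : Finset (Fin m)), (∅ : Finset (Fin n))))
    (Finset.mem_univ _)
  simp at h; exact h

lemma rect_sum_le {m n : ℕ} (A : Matrix (Fin m) (Fin n) ℝ)
    (X : Finset (Fin m)) (Y : Finset (Fin n)) :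
    |∑ i ∈ X, ∑ j ∈ Y, A i j| ≤ cutNorm A * m * n := by
  have h := Finset.le_sup' (s := (Finset.univ : Finset (Finset (Fin m) × Finset (Fin n))))
    (fun p : Finset (Fin m) × Finset (Fin n) =>
      |∑ i ∈ p.1, ∑ j ∈ p.2, A i j| / (m * n)) (b := (X, Y)) (Finset.mem_univ _)
  rcases Nat.eq_zero_or_pos (m * n) with h0 | hpos
  · rcases Nat.mul_eq_zero.mp h0 with hm | hn
    · subst hm
      have hX : X = ∅ := Finset.eq_empty_of_isEmpty X
      have hcn := cutNorm_nonneg' A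
      simp only [hX, Finset.sum_empty, abs_zero, Nat.cast_zero]
      nlinarith [Nat.cast_nonneg (α := ℝ) n]
    · subst hn
      have : ∀ i, (∑ j ∈ Y, A i j) = 0 := by
        intro i
        have : Y = ∅ := Finset.eq_empty_of_isEmpty Y
        simp [this]
      have hcn := cutNorm_nonneg' A
      simp only [this, Finset.sum_const_zero, abs_zero, Nat.cast_zero, mul_zero]
      exact le_refl 0
  · have hpos' : (0:ℝ) < (m:ℝ) * n := by
      have := Nat.cast_pos (α := ℝ) |>.mpr hpos
      push_cast at this
      linarith
    have := (div_le_iff₀ hpos').mp h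
    calc |∑ i ∈ X, ∑ j ∈ Y, A i j| ≤ cutNorm A * ((m:ℝ) * n) := this
      _ = cutNorm A * m * n := by ring

/-- For a real `m × n` matrix `A` and real vectors `x`, `y`,
`|⟨Ax, y⟩| ≤ 4 ‖x‖_∞ ‖y‖_∞ ‖A‖_□ m n`.  (The norm on `Fin k → ℝ` is the sup-norm.) -/
theorem abs_inner_mulVec_le_four_cutNorm {m n : ℕ} (A : Matrix (Fin m) (Fin n) ℝ)
    (x : Fin n → ℝ) (y : Fin m → ℝ) :
    |∑ i, A.mulVec x i * y i| ≤ 4 * ‖x‖ * ‖y‖ * cutNorm A * m * n := by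
  set c : Fin n → ℝ := fun j => ∑ i, A i j * y i with hc
  set ε : Fin n → ℝ := fun j => if 0 ≤ c j then 1 else -1 with hε
  set d : Fin m → ℝ := fun i => ∑ j, ε j * A i j with hd
  set δ : Fin m → ℝ := fun i => if 0 ≤ d i then 1 else -1 with hδ
  have hxn : (0:ℝ) ≤ ‖x‖ := norm_nonneg x
  have hyn : (0:ℝ) ≤ ‖y‖ := norm_nonneg y
  have hx : ∀ j, |x j| ≤ ‖x‖ := fun j => by
    simpa using norm_le_pi_norm x j
  have hy : ∀ i, |y i| ≤ ‖y‖ := fun i => by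
    simpa using norm_le_pi_norm y i
  -- Step 1: |⟨Ax, y⟩| ≤ ‖x‖ * ∑ |c j|
  have key1 : ∑ i, A.mulVec x i * y i = ∑ j, x j * c j := by
    simp only [mulVec, dotProduct, hc, Finset.sum_mul, Finset.mul_sum]
    rw [Finset.sum_comm]
    exact Finset.sum_congr rfl fun j _ => Finset.sum_congr rfl fun i _ => by ring
  have step1 : |∑ i, A.mulVec x i * y i| ≤ ‖x‖ * ∑ j, |c j| := by
    rw [key1, Finset.mul_sum]
    calc |∑ j, x j * c j| ≤ ∑ j, |x j * c j| := Finset.abs_sum_le_sum_abs _ _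
      _ ≤ ∑ j, ‖x‖ * |c j| := by
          refine Finset.sum_le_sum fun j _ => ?_
          rw [abs_mul]
          exact mul_le_mul_of_nonneg_right (hx j) (abs_nonneg _)
  -- Step 2: ∑ |c j| = ∑ i, d i * y i
  have key2 : ∑ j, |c j| = ∑ i, d i * y i := by
    have h1 : ∀ j, |c j| = ε j * c j := by
      intro j
      by_cases h : 0 ≤ c j
      · simp [hε, h, abs_of_nonneg h]
      · simp [hε, h, abs_of_neg (lt_of_not_ge h)]
    calc ∑ j, |c j| = ∑ j, ε j * c j := Finset.sum_congr rfl fun j _ => h1 j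
      _ = ∑ j, ∑ i, ε j * (A i j * y i) := by
          refine Finset.sum_congr rfl fun j _ => ?_
          rw [hc, Finset.mul_sum]
      _ = ∑ i, ∑ j, ε j * (A i j * y i) := Finset.sum_comm
      _ = ∑ i, d i * y i := by
          refine Finset.sum_congr rfl fun i _ => ?_
          rw [hd, Finset.sum_mul]
          exact Finset.sum_congr rfl fun j _ => by ring
  -- Step 3: ∑ i, d i * y i ≤ ‖y‖ * ∑ i, δ i * d i
  have step3 : ∑ i, d i * y i ≤ ‖y‖ * ∑ i, δ i * d i := by
    have h1 : ∀ i, |d i| = δ i * d i := by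
      intro i
      by_cases h : 0 ≤ d i
      · simp [hδ, h, abs_of_nonneg h]
      · simp [hδ, h, abs_of_neg (lt_of_not_ge h)]
    calc ∑ i, d i * y i ≤ ∑ i, |d i * y i| := Finset.sum_le_sum fun i _ => le_abs_self _
      _ ≤ ∑ i, ‖y‖ * |d i| := by
          refine Finset.sum_le_sum fun i _ => ?_
          rw [abs_mul, mul_comm]
          exact mul_le_mul_of_nonneg_right (hy i) (abs_nonneg _)
      _ = ‖y‖ * ∑ i, δ i * d i := by
          rw [Finset.mul_sum]
          exact Finset.sum_congr rfl fun i _ => by rw [h1 i]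
  -- Step 4: T := ∑ i, δ i * d i ≤ 4 * cutNorm A * m * n
  set P : Finset (Fin m) := Finset.univ.filter (fun i => 0 ≤ d i) with hP
  set Q : Finset (Fin n) := Finset.univ.filter (fun j => 0 ≤ c j) with hQ
  have step4 : ∑ i, δ i * d i ≤ 4 * cutNorm A * m * n := by
    have expand : ∑ i, δ i * d i = ∑ i, ∑ j, δ i * ε j * A i j := by
      refine Finset.sum_congr rfl fun i _ => ?_
      rw [hd, Finset.mul_sum]
      exact Finset.sum_congr rfl fun j _ => by ring
    have splitj : ∀ (i : Fin m),
        ∑ j, δ i * ε j * A i j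
          = δ i * ((∑ j ∈ Q, A i j) - ∑ j ∈ Qᶜ, A i j) := by
      intro i
      rw [← Finset.sum_filter_add_sum_filter_not Finset.univ (fun j => 0 ≤ c j)
        (fun j => δ i * ε j * A i j)]
      have e1 : ∑ j ∈ Finset.univ.filter (fun j => 0 ≤ c j), δ i * ε j * A i j
          = δ i * ∑ j ∈ Q, A i j := by
        rw [Finset.mul_sum]
        refine Finset.sum_congr rfl fun j hj => ?_
        have : 0 ≤ c j := (Finset.mem_filter.mp hj).2
        simp [hε, this]
      have e2 : ∑ j ∈ Finset.univ.filter (fun j => ¬ 0 ≤ c j), δ i * ε j * A i j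
          = δ i * -∑ j ∈ Qᶜ, A i j := by
        have hQc : Finset.univ.filter (fun j => ¬ 0 ≤ c j) = Qᶜ := by
          rw [hQ, Finset.compl_filter]
        rw [hQc, mul_neg, Finset.mul_sum, ← Finset.sum_neg_distrib]
        refine Finset.sum_congr rfl fun j hj => ?_
        have : ¬ 0 ≤ c j := by
          rw [hQ, Finset.compl_filter] at hj
          exact (Finset.mem_filter.mp hj).2
        simp only [hε, if_neg this]
        ring
      rw [e1, e2]
      ring
    have spliti : ∑ i, δ i * d i
        = ((∑ i ∈ P, ∑ j ∈ Q, A i j) - ∑ i ∈ P, ∑ j ∈ Qᶜ, A i j)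
          - ((∑ i ∈ Pᶜ, ∑ j ∈ Q, A i j) - ∑ i ∈ Pᶜ, ∑ j ∈ Qᶜ, A i j) := by
      rw [expand]
      calc ∑ i, ∑ j, δ i * ε j * A i j
          = ∑ i, δ i * ((∑ j ∈ Q, A i j) - ∑ j ∈ Qᶜ, A i j) :=
            Finset.sum_congr rfl fun i _ => splitj i
        _ = _ := by
            rw [← Finset.sum_filter_add_sum_filter_not Finset.univ (fun i => 0 ≤ d i)]
            have hPc : Finset.univ.filter (fun i => ¬ 0 ≤ d i) = Pᶜ := by
              rw [hP, Finset.compl_filter]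
            rw [hPc]
            have e1 : ∑ i ∈ Finset.univ.filter (fun i => 0 ≤ d i),
                δ i * ((∑ j ∈ Q, A i j) - ∑ j ∈ Qᶜ, A i j)
                = ∑ i ∈ P, ((∑ j ∈ Q, A i j) - ∑ j ∈ Qᶜ, A i j) := by
              refine Finset.sum_congr rfl fun i hi => ?_
              have : 0 ≤ d i := (Finset.mem_filter.mp hi).2
              simp [hδ, this]
            have e2 : ∑ i ∈ Pᶜ, δ i * ((∑ j ∈ Q, A i j) - ∑ j ∈ Qᶜ, A i j)
                = ∑ i ∈ Pᶜ, -((∑ j ∈ Q, A i j) - ∑ j ∈ Qᶜ, A i j) := by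
              refine Finset.sum_congr rfl fun i hi => ?_
              have : ¬ 0 ≤ d i := by
                rw [hP, Finset.compl_filter] at hi
                exact (Finset.mem_filter.mp hi).2
              simp [hδ, this]
            rw [e1, e2, Finset.sum_sub_distrib, Finset.sum_neg_distrib,
              Finset.sum_sub_distrib]
            ring
    have b1 := rect_sum_le A P Q
    have b2 := rect_sum_le A P Qᶜ
    have b3 := rect_sum_le A Pᶜ Q
    have b4 := rect_sum_le A Pᶜ Qᶜ
    rw [spliti]
    have := abs_le.mp b1
    have := abs_le.mp b2
    have := abs_le.mp b3
    have := abs_le.mp b4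
    obtain ⟨h1l, h1r⟩ := abs_le.mp b1
    obtain ⟨h2l, h2r⟩ := abs_le.mp b2
    obtain ⟨h3l, h3r⟩ := abs_le.mp b3
    obtain ⟨h4l, h4r⟩ := abs_le.mp b4
    linarith
  -- Combine
  calc |∑ i, A.mulVec x i * y i| ≤ ‖x‖ * ∑ j, |c j| := step1
    _ = ‖x‖ * ∑ i, d i * y i := by rw [key2]
    _ ≤ ‖x‖ * (‖y‖ * ∑ i, δ i * d i) :=
        mul_le_mul_of_nonneg_left step3 hxn
    _ ≤ ‖x‖ * (‖y‖ * (4 * cutNorm A * m * n)) := by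
        refine mul_le_mul_of_nonneg_left (mul_le_mul_of_nonneg_left step4 hyn) hxn
    _ = 4 * ‖x‖ * ‖y‖ * cutNorm A * m * n := by ring
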